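/- Let X and E be metric spaces, with X non-empty, and let D = {x₁,x₂,…} be a fixed enumeration of a countable dense subset of X. Then the relation < is ill-founded on Coa(D,E) if and only if X coarsely embeds into E. -/

import Mathlib

open Filter Set Topology
open scoped ENNReal

noncomputable section

/-! ### Metric notions of embeddability -/

/-- A coarse embedding between (pseudo)metric spaces. -/
def CoarseEmbeddingMap {X E : Type*} [PseudoMetricSpace X] [PseudoMetricSpace E]
    (f : X → E) : Prop :=
  ∃ κ ω : ℝ → ℝ,
    MonotoneOn κ (Set.Ici 0) ∧ MonotoneOn ω (Set.Ici 0) ∧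
    (∀ t : ℝ, 0 ≤ t → 0 ≤ κ t ∧ 0 ≤ ω t) ∧
    Filter.Tendsto κ Filter.atTop Filter.atTop ∧
    ∀ x y : X, κ (dist x y) ≤ dist (f x) (f y) ∧ dist (f x) (f y) ≤ ω (dist x y)

/-- A uniform embedding between (pseudo)metric spaces. -/
def UniformEmbeddingMapNL {X E : Type*} [PseudoMetricSpace X] [PseudoMetricSpace E]
    (f : X → E) : Prop :=
  ∃ κ ω : ℝ → ℝ,
    MonotoneOn κ (Set.Ici 0) ∧ MonotoneOn ω (Set.Ici 0) ∧
    (∀ t : ℝ, 0 ≤ t → 0 ≤ κ t ∧ 0 ≤ ω t) ∧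
    (∀ t : ℝ, 0 < t → 0 < κ t) ∧
    Filter.Tendsto ω (nhdsWithin 0 (Set.Ioi 0)) (nhds 0) ∧
    ∀ x y : X, κ (dist x y) ≤ dist (f x) (f y) ∧ dist (f x) (f y) ≤ ω (dist x y)

/-- A bi-Lipschitz embedding between (pseudo)metric spaces. -/
def BiLipschitzEmbeddingMap {X E : Type*} [PseudoMetricSpace X] [PseudoMetricSpace E]
    (f : X → E) : Prop :=
  ∃ c C : ℝ, 0 < c ∧ c ≤ C ∧
    ∀ x y : X, c * dist x y ≤ dist (f x) (f y) ∧ dist (f x) (f y) ≤ C * dist x y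

/-! ### The set `𝒵`, functional moduli and the classes `M_coarse`, `M_uniform`, `M_Lipschitz` -/

/-- The set `𝒵 = {…,1/3,1/2,1,2,3,…} ⊆ (0,∞)`. -/
def Zset : Set ℝ := {r | ∃ n : ℕ, 1 ≤ n ∧ (r = n ∨ r = 1 / n)}

/-- Membership in `𝒩`: a non-decreasing `[0,∞]`-valued modulus on `𝒵` (values outside of `𝒵`
are irrelevant dummy values). -/
def Nmod (κ : ℝ → ℝ≥0∞) : Prop := MonotoneOn κ Zset

/-- `t₋`: the largest element of `𝒵` below a real `t > 0`. -/
def tminus (t : ℝ) : ℝ := if 1 ≤ t then (⌊t⌋ : ℝ) else 1 / (⌈1 / t⌉ : ℝ)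

/-- `t₊`: the smallest element of `𝒵` above a real `t > 0`. -/
def tplus (t : ℝ) : ℝ := if 1 ≤ t then (⌈t⌉ : ℝ) else 1 / (⌊1 / t⌋ : ℝ)

/-- The pair `(κ, ω)` belongs to `M_coarse`. -/
def Mcoarse (κ ω : ℝ → ℝ≥0∞) : Prop :=
  (∀ r ∈ Zset, ω r < ⊤) ∧ Filter.Tendsto (fun n : ℕ => κ n) Filter.atTop (nhds ⊤)

/-- The pair `(κ, ω)` belongs to `M_uniform`. -/
def Muniform (κ ω : ℝ → ℝ≥0∞) : Prop :=
  (∀ r ∈ Zset, 0 < κ r) ∧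
    Filter.Tendsto (fun n : ℕ => ω (1 / (n + 1 : ℝ))) Filter.atTop (nhds 0)

/-- The pair `(κ, ω)` belongs to `M_Lipschitz`. -/
def MLipschitz (κ ω : ℝ → ℝ≥0∞) : Prop :=
  ∃ c C : ℝ, 0 < c ∧ c < C ∧
    ∀ r ∈ Zset, ENNReal.ofReal (c * r) ≤ κ r ∧ ω r ≤ ENNReal.ofReal (C * r)

/-! ### Ill-foundedness and ranks of binary relations restricted to subsets -/

/-- The relation `r` is ill-founded on the subset `S`. -/
def IllFoundedOn {A : Type*} (r : A → A → Prop) (S : Set A) : Prop :=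
  ∃ a : ℕ → A, (∀ n, a n ∈ S) ∧ ∀ n, r (a (n + 1)) (a n)

/-- The rank `rk(S, r)` of a relation `r`, well-founded on a subset `S`. -/
def relRankOn {A : Type*} (r : A → A → Prop) (S : Set A)
    (h : WellFounded fun a b : S => r a b) : Ordinal :=
  ⨆ a : S, Order.succ (h.apply a).rank

/-! ### The simple embeddability ranks -/

/-- A quadruple `(κ, ω, k, φ)` as in the definition of `Ω(D,E)`; the countable dense set `D` is
given by an enumeration `x : ℕ → X` and `φ : D → E` is represented by the map on indices. -/
structure Quad (E : Type*) where
  kappa : ℝ → ℝ≥0∞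
  omega : ℝ → ℝ≥0∞
  k : ℕ
  phi : ℕ → E

/-- The set `Ω(D,E)` where `D` is enumerated by `x : ℕ → X`. -/
def OmegaSet {X E : Type*} [MetricSpace X] [MetricSpace E] (x : ℕ → X) : Set (Quad E) :=
  {q | Nmod q.kappa ∧ Nmod q.omega ∧
    (∀ i j : ℕ, x i = x j → q.phi i = q.phi j) ∧
    ∀ i < q.k, ∀ j < q.k, x i ≠ x j →
      q.kappa (tminus (dist (x i) (x j))) ≤ edist (q.phi i) (q.phi j) ∧
      edist (q.phi i) (q.phi j) ≤ q.omega (tplus (dist (x i) (x j)))}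

/-- The set `Coa(D,E)`. -/
def CoaSet {X E : Type*} [MetricSpace X] [MetricSpace E] (x : ℕ → X) : Set (Quad E) :=
  {q ∈ OmegaSet x | Mcoarse q.kappa q.omega}

/-- The set `Uni(D,E)`. -/
def UniSet {X E : Type*} [MetricSpace X] [MetricSpace E] (x : ℕ → X) : Set (Quad E) :=
  {q ∈ OmegaSet x | Muniform q.kappa q.omega}

/-- The set `Lip(D,E)`. -/
def LipSet {X E : Type*} [MetricSpace X] [MetricSpace E] (x : ℕ → X) : Set (Quad E) :=
  {q ∈ OmegaSet x | MLipschitz q.kappa q.omega}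

/-- The relation `<` on `Ω(D,E)`. -/
def QuadRel {E : Type*} (p q : Quad E) : Prop :=
  p.kappa = q.kappa ∧ p.omega = q.omega ∧ p.k = q.k + 1 ∧ ∀ i < q.k, p.phi i = q.phi i

/-! ### Embeddability ranks based on Schauder bases -/

/-- The copy of `ℤ` inside `ℝ`. -/
def ZR : Set ℝ := Set.range ((↑) : ℤ → ℝ)

/-- The copy of `ℚ` inside `ℝ`. -/
def QR : Set ℝ := Set.range ((↑) : ℚ → ℝ)

/-- `R[A]`: the set of `R`-linear combinations of the vectors `e i`, `i ∈ A`. -/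
def RComb {X : Type*} [NormedAddCommGroup X] [Module ℝ X] (R : Set ℝ) (e : ℕ → X)
    (A : Finset ℕ) : Set X :=
  {x | ∃ c : ℕ → ℝ, (∀ i, c i ∈ R) ∧ x = ∑ i ∈ A, c i • e i}

/-- `R[e₁,e₂,…]`: the set of all finite `R`-linear combinations of the vectors `e i`. -/
def RCombAll {X : Type*} [NormedAddCommGroup X] [Module ℝ X] (R : Set ℝ) (e : ℕ → X) : Set X :=
  ⋃ A : Finset ℕ, RComb R e A

/-- `A ≺* B` for finite subsets of `ℕ`: `A` is obtained from `B` by adding one element larger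
than all elements of `B`. -/
def PrecStar (A B : Finset ℕ) : Prop := ∃ m : ℕ, (∀ b ∈ B, b < m) ∧ A = insert m B

/-- A quadruple `(κ, ω, A, φ)` as in the definition of `Θ(R,(eₙ),E)`; the finite subset `A` of
`{e₁,e₂,…}` is recorded by the finite set of indices, and `φ` (a map on `R[e₁,e₂,…]`) is
represented by a map on `X` (only its values on `R`-linear combinations are ever relevant). -/
structure QuadF (X E : Type*) where
  kappa : ℝ → ℝ≥0∞
  omega : ℝ → ℝ≥0∞
  A : Finset ℕ
  phi : X → E

/-- The set `Θ(R,(eₙ),E)`. -/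
def ThetaSet {X E : Type*} [NormedAddCommGroup X] [Module ℝ X] [MetricSpace E]
    (R : Set ℝ) (e : ℕ → X) : Set (QuadF X E) :=
  {q | Nmod q.kappa ∧ Nmod q.omega ∧
    ∀ x ∈ RComb R e q.A, ∀ y ∈ RComb R e q.A, x ≠ y →
      q.kappa (tminus (dist x y)) ≤ edist (q.phi x) (q.phi y) ∧
      edist (q.phi x) (q.phi y) ≤ q.omega (tplus (dist x y))}

/-- The set `Coa(R,(eₙ),E)`. -/
def CoaTheta {X E : Type*} [NormedAddCommGroup X] [Module ℝ X] [MetricSpace E]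
    (R : Set ℝ) (e : ℕ → X) : Set (QuadF X E) :=
  {q ∈ ThetaSet R e | Mcoarse q.kappa q.omega}

/-- The set `Uni(R,(eₙ),E)`. -/
def UniTheta {X E : Type*} [NormedAddCommGroup X] [Module ℝ X] [MetricSpace E]
    (R : Set ℝ) (e : ℕ → X) : Set (QuadF X E) :=
  {q ∈ ThetaSet R e | Muniform q.kappa q.omega}

/-- The set `Lip(R,(eₙ),E)`. -/
def LipTheta {X E : Type*} [NormedAddCommGroup X] [Module ℝ X] [MetricSpace E]
    (R : Set ℝ) (e : ℕ → X) : Set (QuadF X E) :=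
  {q ∈ ThetaSet R e | MLipschitz q.kappa q.omega}

/-- The relation `<` on `Θ(R,(eₙ),E)`. -/
def QuadFRel {X E : Type*} [NormedAddCommGroup X] [Module ℝ X]
    (R : Set ℝ) (e : ℕ → X) (p q : QuadF X E) : Prop :=
  p.kappa = q.kappa ∧ p.omega = q.omega ∧ PrecStar p.A q.A ∧
    ∀ x ∈ RComb R e q.A, p.phi x = q.phi x

/-! ### Schauder bases, basic sequences, subsymmetric bases -/

/-- `(eₙ)` is a Schauder basis of the subset `S`: every element of `S` has a unique
norm-convergent expansion. -/
def IsSchauderBasisOf {X : Type*} [NormedAddCommGroup X] [Module ℝ X] (e : ℕ → X)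
    (S : Set X) : Prop :=
  ∀ x ∈ S, ∃! a : ℕ → ℝ,
    Filter.Tendsto (fun N => ∑ i ∈ Finset.range N, a i • e i) Filter.atTop (nhds x)

/-- `(eₙ)` is a Schauder basis of the whole space `X`. -/
def IsSchauderBasis {X : Type*} [NormedAddCommGroup X] [Module ℝ X] (e : ℕ → X) : Prop :=
  IsSchauderBasisOf e Set.univ

/-- `(eₙ)` is a basic sequence: it is a Schauder basis of its closed linear span. -/
def IsBasicSequence {X : Type*} [NormedAddCommGroup X] [Module ℝ X] (e : ℕ → X) : Prop :=
  IsSchauderBasisOf e (closure (Submodule.span ℝ (Set.range e) : Set X))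

/-- `(eₙ)` is a subsymmetric basic sequence. -/
def IsSubsymmetric {X : Type*} [NormedAddCommGroup X] [Module ℝ X] (e : ℕ → X) : Prop :=
  IsBasicSequence e ∧ ∃ C : ℝ, 1 ≤ C ∧ ∀ n : ℕ → ℕ, StrictMono n →
    ∀ s : Finset ℕ, ∀ a : ℕ → ℝ,
      C⁻¹ * ‖∑ k ∈ s, a k • e k‖ ≤ ‖∑ k ∈ s, a k • e (n k)‖ ∧
      ‖∑ k ∈ s, a k • e (n k)‖ ≤ C * ‖∑ k ∈ s, a k • e k‖

/-! ### Schreier families -/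

/-- `n ≤ A`: either `A = ∅` or `n ≤ min A`. -/
def natLE (n : ℕ) (A : Finset ℕ) : Prop := ∀ a ∈ A, n ≤ a

/-- `A < B`: either one is empty or `max A < min B`. -/
def finLT (A B : Finset ℕ) : Prop := ∀ a ∈ A, ∀ b ∈ B, a < b

/-- The Schreier families `S_α`, relative to a fixed assignment `lseq` of fundamental sequences
to (countable) limit ordinals; here `lseq l n` denotes `λ_{n+1}` in 1-based notation. -/
def Schreier (lseq : Ordinal → ℕ → Ordinal) (α : Ordinal) : Set (Finset ℕ) :=
  Ordinal.limitRecOn α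
    ({A | ∃ n : ℕ, 1 ≤ n ∧ A = {n}} ∪ {∅})
    (fun _ S => {A | ∃ n : ℕ, 1 ≤ n ∧ ∃ f : ℕ → Finset ℕ,
      (∀ i < n, f i ∈ S) ∧ natLE n (f 0) ∧
      (∀ i j : ℕ, i < j → j < n → finLT (f i) (f j)) ∧
      A = (Finset.range n).biUnion f})
    (fun o _ ih => {A | ∃ n : ℕ, natLE (n + 1) A ∧ ∃ h : lseq o n < o, A ∈ ih (lseq o n) h})

/-- `lseq` is a legitimate assignment of fundamental sequences: to every countable limit
ordinal `l` it assigns a strictly increasing sequence of smaller ordinals with supremum `l`. -/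
def IsFundSeq (lseq : Ordinal → ℕ → Ordinal) : Prop :=
  ∀ l : Ordinal, (l ≠ 0 ∧ ∀ a < l, Order.succ a < l) → l < (Cardinal.aleph 1).ord →
    StrictMono (lseq l) ∧ (∀ n, lseq l n < l) ∧ (⨆ n, lseq l n) = l

/-! ### The space `c₀` and `Z[S_α]_{c₀}` -/

/-- The Banach space `c₀` of real sequences vanishing at infinity, with the sup norm. -/
abbrev c0 : Type := ZeroAtInftyContinuousMap ℕ ℝ

/-- The standard unit vector basis of `c₀`. -/
def stdBasis (n : ℕ) : c0 :=
  { toFun := fun m => if m = n then (1 : ℝ) else 0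
    continuous_toFun := continuous_of_discreteTopology
    zero_at_infty' := by
      refine Filter.Tendsto.mono_left ?_ Filter.cocompact_le_cofinite
      refine tendsto_nhds_of_eventually_eq ?_
      refine Filter.eventually_cofinite.mpr (Set.Finite.subset (Set.finite_singleton n) ?_)
      intro m hm
      by_contra h
      exact hm (if_neg h) }

/-- The metric space `Z[S_α]_{c₀}` (as a subset of `c₀`). -/
def ZSchreierSet (lseq : Ordinal → ℕ → Ordinal) (α : Ordinal) : Set c0 :=
  {x | ∃ A ∈ Schreier lseq α, ∃ t : ℕ → ℤ, x = ∑ i ∈ A, (t i : ℝ) • stdBasis i}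

/-! ### Eventual domination -/

/-- The family `F ⊆ ℕ^ℕ` is bounded with respect to eventual domination. -/
def EvDomBounded (F : Set (ℕ → ℕ)) : Prop :=
  ∃ g : ℕ → ℕ, ∀ f ∈ F, ∀ᶠ m in Filter.atTop, f m < g m

end

lemma zset_pos {r : ℝ} (h : r ∈ Zset) : 0 < r := by
  obtain ⟨n, hn, h | h⟩ := h <;> subst h
  · exact_mod_cast Nat.lt_of_lt_of_le Nat.zero_lt_one hn
  · positivity

lemma natcast_mem_zset {n : ℕ} (hn : 1 ≤ n) : (n : ℝ) ∈ Zset := ⟨n, hn, Or.inl rfl⟩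

lemma tminus_mem {t : ℝ} (ht : 0 < t) : tminus t ∈ Zset := by
  unfold tminus
  split_ifs with h
  · refine ⟨⌊t⌋.toNat, ?_, Or.inl ?_⟩
    · have : (1 : ℤ) ≤ ⌊t⌋ := by exact_mod_cast Int.le_floor.mpr (by exact_mod_cast h)
      omega
    · have hb : (1 : ℤ) ≤ ⌊t⌋ := Int.le_floor.mpr (by exact_mod_cast h)
      have h' : ((⌊t⌋.toNat : ℤ)) = ⌊t⌋ := Int.toNat_of_nonneg (by omega)
      exact_mod_cast h'.symm
  · push_neg at h
    have h1 : (1 : ℝ) < 1 / t := one_lt_one_div ht h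
    have h2 : (1 : ℤ) ≤ ⌈1 / t⌉ := Int.le_ceil_iff.mpr (by norm_num; linarith)
    refine ⟨⌈1/t⌉.toNat, by omega, Or.inr ?_⟩
    have h' : ((⌈1/t⌉.toNat : ℤ)) = ⌈1/t⌉ := Int.toNat_of_nonneg (by omega)
    exact_mod_cast congrArg (fun z : ℝ => 1 / z) (show ((⌈1/t⌉:ℝ)) = (⌈1/t⌉.toNat : ℝ) by exact_mod_cast h'.symm)

lemma tplus_mem {t : ℝ} (ht : 0 < t) : tplus t ∈ Zset := by
  unfold tplus
  split_ifs with h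
  · have h2 : (1 : ℤ) ≤ ⌈t⌉ := Int.le_ceil_iff.mpr (by norm_num; linarith)
    refine ⟨⌈t⌉.toNat, by omega, Or.inl ?_⟩
    have h' : ((⌈t⌉.toNat : ℤ)) = ⌈t⌉ := Int.toNat_of_nonneg (by omega)
    exact_mod_cast h'.symm
  · push_neg at h
    have h1 : (1 : ℝ) < 1 / t := one_lt_one_div ht h
    have h2 : (1 : ℤ) ≤ ⌊1 / t⌋ := Int.le_floor.mpr (by exact_mod_cast h1.le)
    refine ⟨⌊1/t⌋.toNat, by omega, Or.inr ?_⟩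
    have h' : ((⌊1/t⌋.toNat : ℤ)) = ⌊1/t⌋ := Int.toNat_of_nonneg (by omega)
    exact_mod_cast congrArg (fun z : ℝ => 1 / z) (show ((⌊1/t⌋:ℝ)) = (⌊1/t⌋.toNat : ℝ) by exact_mod_cast h'.symm)

lemma tminus_le {t : ℝ} (ht : 0 < t) : tminus t ≤ t := by
  unfold tminus
  split_ifs with h
  · exact Int.floor_le t
  · push_neg at h
    have h1 : (1 : ℝ) < 1 / t := one_lt_one_div ht h
    have h2 : (0 : ℝ) < ⌈1 / t⌉ := by
      have := Int.le_ceil (1/t); push_cast at this ⊢; linarith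
    rw [div_le_iff₀ h2]
    have := Int.le_ceil (1/t)
    calc (1:ℝ) = t * (1/t) := by field_simp
    _ ≤ t * ⌈1/t⌉ := by nlinarith
lemma le_tplus {t : ℝ} (ht : 0 < t) : t ≤ tplus t := by
  unfold tplus
  split_ifs with h
  · exact Int.le_ceil t
  · push_neg at h
    have h1 : (1 : ℝ) < 1 / t := one_lt_one_div ht h
    have h2 : (1 : ℤ) ≤ ⌊1 / t⌋ := Int.le_floor.mpr (by exact_mod_cast h1.le)
    have h3 : (0 : ℝ) < ⌊1/t⌋ := by exact_mod_cast h2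
    rw [le_div_iff₀ h3]
    have := Int.floor_le (1/t)
    calc t * ⌊1/t⌋ ≤ t * (1/t) := by nlinarith
    _ = 1 := by field_simp

lemma tminus_mono {s t : ℝ} (hs : 0 < s) (hst : s ≤ t) : tminus s ≤ tminus t := by
  have ht : 0 < t := lt_of_lt_of_le hs hst
  unfold tminus
  split_ifs with h1 h2 h2
  · exact_mod_cast Int.floor_le_floor hst
  · linarith
  · -- s < 1 ≤ t
    have := tminus_le hs
    unfold tminus at this; rw [if_neg h1] at this
    have h3 : (1:ℝ) ≤ ⌊t⌋ := by exact_mod_cast Int.le_floor.mpr (by exact_mod_cast h2)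
    push_neg at h1; linarith
  · push_neg at h1 h2
    have h1s : (1 : ℝ) < 1 / s := one_lt_one_div hs h1
    have h1t : (1 : ℝ) < 1 / t := one_lt_one_div ht h2
    have hle : 1 / t ≤ 1 / s := one_div_le_one_div_of_le hs hst
    have hc : (⌈1/t⌉ : ℝ) ≤ ⌈1/s⌉ := by exact_mod_cast Int.ceil_le_ceil hle
    have hct : (0:ℝ) < ⌈1/t⌉ := by
      have := Int.le_ceil (1/t); linarith
    exact one_div_le_one_div_of_le hct hc

lemma tplus_mono {s t : ℝ} (hs : 0 < s) (hst : s ≤ t) : tplus s ≤ tplus t := by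
  have ht : 0 < t := lt_of_lt_of_le hs hst
  unfold tplus
  split_ifs with h1 h2 h2
  · exact_mod_cast Int.ceil_le_ceil hst
  · linarith
  · -- s < 1 ≤ t
    push_neg at h1
    have h1s : (1 : ℝ) < 1 / s := one_lt_one_div hs h1
    have h2' : (1 : ℤ) ≤ ⌊1 / s⌋ := Int.le_floor.mpr (by exact_mod_cast h1s.le)
    have h3 : (1:ℝ) ≤ ⌊1/s⌋ := by exact_mod_cast h2'
    have h4 : 1 / (⌊1/s⌋ : ℝ) ≤ 1 := by
      rw [div_le_one (by linarith)]; exact h3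
    have h5 : (1:ℝ) ≤ ⌈t⌉ := by
      have := Int.le_ceil t; linarith
    linarith
  · push_neg at h1 h2
    have h1t : (1 : ℝ) < 1 / t := one_lt_one_div ht h2
    have hle : 1 / t ≤ 1 / s := one_div_le_one_div_of_le hs hst
    have hc : (⌊1/t⌋ : ℝ) ≤ ⌊1/s⌋ := by exact_mod_cast Int.floor_le_floor hle
    have hct : (1 : ℤ) ≤ ⌊1 / t⌋ := Int.le_floor.mpr (by exact_mod_cast h1t.le)
    have hct' : (0:ℝ) < ⌊1/t⌋ := by exact_mod_cast hct
    exact one_div_le_one_div_of_le hct' hc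

lemma tminus_pos {t : ℝ} (ht : 0 < t) : 0 < tminus t := zset_pos (tminus_mem ht)
lemma tplus_pos {t : ℝ} (ht : 0 < t) : 0 < tplus t := zset_pos (tplus_mem ht)

lemma tminus_eq_floor {t : ℝ} (ht : 1 ≤ t) : tminus t = (⌊t⌋ : ℝ) := if_pos ht

lemma floor_mem_zset {t : ℝ} (ht : 1 ≤ t) : ∃ n : ℕ, 1 ≤ n ∧ tminus t = (n : ℝ) := by
  have := tminus_mem (by linarith : (0:ℝ) < t)
  refine ⟨⌊t⌋.toNat, ?_, ?_⟩
  · have : (1 : ℤ) ≤ ⌊t⌋ := Int.le_floor.mpr (by exact_mod_cast ht)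
    omega
  · rw [tminus_eq_floor ht]
    have hb : (1 : ℤ) ≤ ⌊t⌋ := Int.le_floor.mpr (by exact_mod_cast ht)
    have h' : ((⌊t⌋.toNat : ℤ)) = ⌊t⌋ := Int.toNat_of_nonneg (by omega)
    exact_mod_cast h'.symm

lemma tminus_ge_sub_one {t : ℝ} (ht : 1 ≤ t) : t - 1 ≤ tminus t := by
  rw [tminus_eq_floor ht]
  linarith [Int.sub_one_lt_floor t]

theorem stmt4 {X E : Type*} [MetricSpace X] [MetricSpace E]
    (x : ℕ → X) (hx : DenseRange x) :
    IllFoundedOn QuadRel (CoaSet (E := E) x) ↔ ∃ f : X → E, CoarseEmbeddingMap f := by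
  constructor
  · rintro ⟨a, hmem, hrel⟩
    classical
    set κ : ℝ → ℝ≥0∞ := (a 0).kappa with hκdef
    set ω : ℝ → ℝ≥0∞ := (a 0).omega with hωdef
    have hκn : ∀ m, (a m).kappa = κ := by
      intro m; induction m with
      | zero => rfl
      | succ m ih => rw [(hrel m).1, ih]
    have hωn : ∀ m, (a m).omega = ω := by
      intro m; induction m with
      | zero => rfl
      | succ m ih => rw [(hrel m).2.1, ih]
    have hkn : ∀ m, (a m).k = (a 0).k + m := by
      intro m; induction m with
      | zero => rfl
      | succ m ih => rw [(hrel m).2.2.1, ih]; omega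
    have hstab : ∀ n i, i < (a n).k → ∀ m, n ≤ m → (a m).phi i = (a n).phi i := by
      intro n i hi m hm
      induction m, hm using Nat.le_induction with
      | base => rfl
      | succ m hm ih =>
        have hik : i < (a m).k := lt_of_lt_of_le hi (by rw [hkn n, hkn m]; omega)
        rw [(hrel m).2.2.2 i hik, ih]
    set φ : ℕ → E := fun i => (a (i + 1)).phi i with hφdef
    have hphik : ∀ m i, i < (a m).k → (a m).phi i = φ i := by
      intro m i hi
      have h1 : i < (a (i + 1)).k := by rw [hkn]; omega
      rcases le_total m (i + 1) with h | h
      · exact (hstab m i hi (i + 1) h).symm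
      · exact hstab (i + 1) i h1 m h
    have hikm : ∀ i j : ℕ, i < (a (max i j + 1)).k ∧ j < (a (max i j + 1)).k := by
      intro i j; rw [hkn]; omega
    have heqφ : ∀ i j, x i = x j → φ i = φ j := by
      intro i j h
      set m := max i j + 1
      rw [← hphik m i (hikm i j).1, ← hphik m j (hikm i j).2]
      exact (hmem m).1.2.2.1 i j h
    have hNκ : Nmod κ := (hmem 0).1.1
    have hNω : Nmod ω := (hmem 0).1.2.1
    have hMc : Mcoarse κ ω := (hmem 0).2
    have hkey : ∀ i j, x i ≠ x j →
        κ (tminus (dist (x i) (x j))) ≤ edist (φ i) (φ j) ∧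
        edist (φ i) (φ j) ≤ ω (tplus (dist (x i) (x j))) := by
      intro i j h
      set m := max i j + 1
      have := (hmem m).1.2.2.2 i (hikm i j).1 j (hikm i j).2 h
      rwa [hκn m, hωn m, hphik m i (hikm i j).1, hphik m j (hikm i j).2] at this
    choose n hn using fun p : X => hx.exists_dist_lt p one_pos
    set f : X → E := fun p => φ (n p) with hfdef
    set κ' : ℝ → ℝ := fun t =>
      if 3 ≤ t then (min (κ (tminus (t - 2))) (ENNReal.ofReal t)).toReal else 0 with hκ'def
    set ω' : ℝ → ℝ := fun t => (ω (tplus (t + 2))).toReal with hω'def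
    -- d-estimates
    have hdub : ∀ p q : X, dist (x (n p)) (x (n q)) ≤ dist p q + 2 := by
      intro p q
      have h1 := hn p; have h2 := hn q
      have := dist_triangle4 (x (n p)) p q (x (n q))
      rw [dist_comm (x (n p)) p] at this
      linarith
    have hdlb : ∀ p q : X, dist p q - 2 ≤ dist (x (n p)) (x (n q)) := by
      intro p q
      have h1 := hn p; have h2 := hn q
      have := dist_triangle4 p (x (n p)) (x (n q)) q
      rw [dist_comm (x (n q)) q] at this
      linarith
    refine ⟨f, κ', ω', ?_, ?_, ?_, ?_, ?_⟩
    · -- κ' monotone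
      intro s hs t ht hst
      simp only [hκ'def]
      split_ifs with h1 h2 h2
      · have hs2 : (0 : ℝ) < s - 2 := by linarith
        refine ENNReal.toReal_mono (ne_top_of_le_ne_top ENNReal.ofReal_ne_top (min_le_right _ _)) ?_
        exact min_le_min
          (hNκ (tminus_mem hs2) (tminus_mem (by linarith)) (tminus_mono hs2 (by linarith)))
          (ENNReal.ofReal_le_ofReal hst)
      · linarith
      · exact ENNReal.toReal_nonneg
      · exact le_refl 0
    · -- ω' monotone
      intro s hs t ht hst
      rw [mem_Ici] at hs ht
      simp only [hω'def]
      refine ENNReal.toReal_mono (hMc.1 _ (tplus_mem (by linarith))).ne ?_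
      exact hNω (tplus_mem (by linarith)) (tplus_mem (by linarith))
        (tplus_mono (by linarith) (by linarith))
    · -- nonneg
      intro t ht
      constructor
      · simp only [hκ'def]; split_ifs <;> simp [ENNReal.toReal_nonneg]
      · exact ENNReal.toReal_nonneg
    · -- tendsto
      rw [tendsto_atTop]
      intro b
      set c : ℝ := max b 0 with hcdef
      have hc0 : 0 ≤ c := le_max_right b 0
      have hev := ENNReal.tendsto_nhds_top_iff_nnreal.mp hMc.2 c.toNNReal
      obtain ⟨n₀, hn₀⟩ := eventually_atTop.mp hev
      set n₁ : ℕ := max n₀ 1 with hn₁def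
      have hκn₁ : ENNReal.ofReal c < κ n₁ := by
        have := hn₀ n₁ (le_max_left _ _)
        rwa [ENNReal.ofReal] 
      filter_upwards [eventually_ge_atTop (max (max c 3) ((n₁ : ℝ) + 3))] with t htge
      have ht3 : (3 : ℝ) ≤ t := le_trans (le_trans (le_max_right c 3) (le_max_left _ _)) htge
      have htc : c ≤ t := le_trans (le_trans (le_max_left c 3) (le_max_left _ _)) htge
      have htn : (n₁ : ℝ) + 3 ≤ t := le_trans (le_max_right _ _) htge
      have hbound : ENNReal.ofReal c ≤ min (κ (tminus (t - 2))) (ENNReal.ofReal t) := by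
        refine le_min ?_ (ENNReal.ofReal_le_ofReal htc)
        refine le_trans hκn₁.le ?_
        refine hNκ (natcast_mem_zset (le_max_right n₀ 1)) (tminus_mem (by linarith)) ?_
        have := tminus_ge_sub_one (show (1:ℝ) ≤ t - 2 by linarith)
        linarith
      have : c ≤ κ' t := by
        simp only [hκ'def]
        rw [if_pos ht3]
        calc c = (ENNReal.ofReal c).toReal := (ENNReal.toReal_ofReal hc0).symm
        _ ≤ _ := ENNReal.toReal_mono
            (ne_top_of_le_ne_top ENNReal.ofReal_ne_top (min_le_right _ _)) hbound
      exact le_trans (le_max_left b 0) this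
    · -- bounds
      intro p q
      set t := dist p q with htdef
      have ht0 : 0 ≤ t := dist_nonneg
      constructor
      · -- lower
        simp only [hκ'def]
        split_ifs with h3
        · have hd : t - 2 ≤ dist (x (n p)) (x (n q)) := hdlb p q
          have hd0 : (0 : ℝ) < dist (x (n p)) (x (n q)) := by linarith
          have hne : x (n p) ≠ x (n q) := dist_pos.mp hd0
          have hch : min (κ (tminus (t - 2))) (ENNReal.ofReal t) ≤ edist (φ (n p)) (φ (n q)) := by
            refine le_trans (min_le_left _ _) (le_trans ?_ (hkey _ _ hne).1)
            exact hNκ (tminus_mem (by linarith)) (tminus_mem hd0) (tminus_mono (by linarith) hd)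
          calc (min (κ (tminus (t - 2))) (ENNReal.ofReal t)).toReal
              ≤ (edist (φ (n p)) (φ (n q))).toReal := ENNReal.toReal_mono (edist_ne_top _ _) hch
          _ = dist (f p) (f q) := (dist_edist _ _).symm
        · exact dist_nonneg
      · -- upper
        by_cases hxe : x (n p) = x (n q)
        · have : f p = f q := heqφ _ _ hxe
          rw [this, dist_self]
          exact ENNReal.toReal_nonneg
        · have hd0 : (0 : ℝ) < dist (x (n p)) (x (n q)) := dist_pos.mpr hxe
          have hch : edist (φ (n p)) (φ (n q)) ≤ ω (tplus (t + 2)) := by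
            refine le_trans (hkey _ _ hxe).2 ?_
            exact hNω (tplus_mem hd0) (tplus_mem (by linarith))
              (tplus_mono hd0 (hdub p q))
          calc dist (f p) (f q) = (edist (φ (n p)) (φ (n q))).toReal := dist_edist _ _
          _ ≤ ω' t := ENNReal.toReal_mono (hMc.1 _ (tplus_mem (by linarith))).ne hch
  · rintro ⟨f, κ, ω, hκm, hωm, hnn, hκt, hb⟩
    refine ⟨fun m => ⟨fun r => ENNReal.ofReal (κ r), fun r => ENNReal.ofReal (ω r), m,
      fun i => f (x i)⟩, ?_, ?_⟩
    · intro m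
      refine ⟨⟨?_, ?_, ?_, ?_⟩, ?_, ?_⟩
      · intro r hr s hs hrs
        exact ENNReal.ofReal_le_ofReal (hκm (zset_pos hr).le (zset_pos hs).le hrs)
      · intro r hr s hs hrs
        exact ENNReal.ofReal_le_ofReal (hωm (zset_pos hr).le (zset_pos hs).le hrs)
      · intro i j h; simp only; rw [h]
      · intro i _ j _ hne
        set d := dist (x i) (x j) with hddef
        have hd0 : 0 < d := dist_pos.mpr hne
        constructor
        · rw [edist_dist]
          refine ENNReal.ofReal_le_ofReal (le_trans ?_ (hb (x i) (x j)).1)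
          exact hκm (tminus_pos hd0).le hd0.le (tminus_le hd0)
        · rw [edist_dist]
          refine ENNReal.ofReal_le_ofReal (le_trans (hb (x i) (x j)).2 ?_)
          exact hωm hd0.le (tplus_pos hd0).le (le_tplus hd0)
      · intro r _; exact ENNReal.ofReal_lt_top
      · rw [ENNReal.tendsto_nhds_top_iff_nnreal]
        intro c
        have hev : ∀ᶠ m : ℕ in atTop, (c : ℝ) < κ m :=
          (hκt.comp tendsto_natCast_atTop_atTop).eventually_gt_atTop (c : ℝ)
        filter_upwards [hev] with m hm
        calc (c : ℝ≥0∞) = ENNReal.ofReal (c : ℝ) := (ENNReal.ofReal_coe_nnreal (p := c)).symm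
        _ < ENNReal.ofReal (κ m) := (ENNReal.ofReal_lt_ofReal_iff (lt_of_le_of_lt c.2 hm)).mpr hm
    · intro m; exact ⟨rfl, rfl, rfl, fun i _ => rfl⟩
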